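/- Let n ≥ 3 and let N be a nontrivial normal subgroup of B_n with N ∩ B_{n-1} = 1. If the restriction of the Dehornoy ordering to N is discrete, then the least positive element of N lies in the centralizer of B_{n-1} in B_n. -/

import Mathlib

/-- The braid relations on generators indexed by `Fin m` (generator `i` is `σ_{i+1}`). -/
def braidRels (m : ℕ) : Set (FreeGroup (Fin m)) :=
  {r | (∃ i j : Fin m, (i : ℕ) + 1 < (j : ℕ) ∧
        r = FreeGroup.of i * FreeGroup.of j * (FreeGroup.of i)⁻¹ * (FreeGroup.of j)⁻¹) ∨
       (∃ i j : Fin m, (i : ℕ) + 1 = (j : ℕ) ∧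
        r = FreeGroup.of i * FreeGroup.of j * FreeGroup.of i *
            (FreeGroup.of j * FreeGroup.of i * FreeGroup.of j)⁻¹)}

/-- The Artin braid group `B_n`, presented with generators `σ₁, …, σ_{n-1}`. -/
abbrev BraidGroup (n : ℕ) := PresentedGroup (braidRels (n - 1))

/-- The Artin generator; `braidGen i` represents `σ_{i+1}`. -/
def braidGen {n : ℕ} (i : Fin (n - 1)) : BraidGroup n := PresentedGroup.of i

/-- `σ_k` (1-indexed), or `1` if out of range. -/
def sigma' (n k : ℕ) : BraidGroup n :=
  if h : k - 1 < n - 1 then braidGen ⟨k - 1, h⟩ else 1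

/-- A braid is `i`-positive (`i : Fin (n-1)` standing for `σ_{i+1}`) if it is represented by
a word using only generators of index ≤ i, in which generator `i` occurs, and only with
positive exponent. -/
def IsIPositive {n : ℕ} (β : BraidGroup n) (i : Fin (n - 1)) : Prop :=
  ∃ w : FreeGroup (Fin (n - 1)), PresentedGroup.mk (braidRels (n - 1)) w = β ∧
    (∀ l ∈ w.toWord, l.1 ≤ i ∧ (l.1 = i → l.2 = true)) ∧ (∃ l ∈ w.toWord, l.1 = i)

/-- A braid is `i`-negative if its inverse is `i`-positive. -/
def IsINegative {n : ℕ} (β : BraidGroup n) (i : Fin (n - 1)) : Prop :=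
  IsIPositive β⁻¹ i

/-- Dehornoy-positive braids: `i`-positive for some `i`. -/
def DPos {n : ℕ} (β : BraidGroup n) : Prop := ∃ i, IsIPositive β i

/-- The Dehornoy ordering on `B_n`. -/
def DLt {n : ℕ} (a b : BraidGroup n) : Prop := DPos (a⁻¹ * b)

/-- The copy of `B_r` inside `B_n` generated by `σ₁, …, σ_{r-1}`. -/
def braidSub (n r : ℕ) : Subgroup (BraidGroup n) :=
  Subgroup.closure {β | ∃ i : Fin (n - 1), (i : ℕ) < r - 1 ∧ β = braidGen i}

/-- `σ_a σ_{a-1} ⋯ σ_b` (1-indexed). -/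
def descSeg (n a b : ℕ) : BraidGroup n :=
  (((List.range (a - b + 1)).map fun j => sigma' n (a - j)).prod)

/-- The Garside half twist `Δ_k = (σ_{k-1}⋯σ₁)(σ_{k-1}⋯σ₂)⋯(σ_{k-1}σ_{k-2})(σ_{k-1})`
viewed in `B_n`. -/
def Delta (n k : ℕ) : BraidGroup n :=
  (((List.range (k - 1)).map fun m => descSeg n (k - 1) (m + 1)).prod)

/- ### Auxiliary lemmas -/

lemma letters_mul {α : Type*} [DecidableEq α] (x y : FreeGroup α) :
    ∀ l ∈ (x * y).toWord, l ∈ x.toWord ∨ l ∈ y.toWord := by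
  intro l hl
  have h1 : x * y = FreeGroup.mk (x.toWord ++ y.toWord) := by
    rw [← FreeGroup.mul_mk, FreeGroup.mk_toWord, FreeGroup.mk_toWord]
  rw [h1, FreeGroup.toWord_mk] at hl
  have hs : List.Sublist (FreeGroup.reduce (x.toWord ++ y.toWord)) (x.toWord ++ y.toWord) :=
    (FreeGroup.reduce.red (L := x.toWord ++ y.toWord)).sublist
  have := hs.subset hl
  simpa using this

lemma letters_inv {α : Type*} [DecidableEq α] (x : FreeGroup α) :
    ∀ l ∈ x⁻¹.toWord, (l.1, !l.2) ∈ x.toWord := by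
  intro l hl
  rw [FreeGroup.toWord_inv, FreeGroup.invRev] at hl
  simp only [List.mem_reverse, List.mem_map] at hl
  obtain ⟨a, ha, rfl⟩ := hl
  simpa using ha

lemma mk_mem_braidSub {n : ℕ} (L : List (Fin (n - 1) × Bool))
    (hL : ∀ l ∈ L, (l.1 : ℕ) < n - 1 - 1) :
    PresentedGroup.mk (braidRels (n - 1)) (FreeGroup.mk L) ∈ braidSub n (n - 1) := by
  induction L with
  | nil =>
    have h0 : FreeGroup.mk ([] : List (Fin (n - 1) × Bool)) = 1 := FreeGroup.one_eq_mk.symm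
    rw [h0, map_one]; exact one_mem _
  | cons a L ih =>
    have h1 : FreeGroup.mk (a :: L) = FreeGroup.mk [a] * FreeGroup.mk L := by
      rw [FreeGroup.mul_mk]; rfl
    rw [h1, map_mul]
    refine mul_mem ?_ (ih fun l hl => hL l (List.mem_cons_of_mem _ hl))
    have ha := hL a List.mem_cons_self
    obtain ⟨i, b⟩ := a
    have hgen : braidGen i ∈ braidSub n (n - 1) :=
      Subgroup.subset_closure ⟨i, ha, rfl⟩
    have hgen' : PresentedGroup.mk (braidRels (n - 1)) (FreeGroup.of i)
        ∈ braidSub n (n - 1) := hgen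
    cases b with
    | false =>
      have he : FreeGroup.mk [(i, false)] = (FreeGroup.of i)⁻¹ := by
        show FreeGroup.mk [(i, false)] = (FreeGroup.mk [(i, true)])⁻¹
        rw [FreeGroup.inv_mk]
        simp [FreeGroup.invRev]
      rw [he, map_inv]
      exact inv_mem hgen'
    | true => exact hgen'

lemma exists_word_of_mem_braidSub {n : ℕ} {g : BraidGroup n} (hg : g ∈ braidSub n (n - 1)) :
    ∃ u : FreeGroup (Fin (n - 1)), PresentedGroup.mk (braidRels (n - 1)) u = g ∧
      ∀ l ∈ u.toWord, (l.1 : ℕ) < n - 1 - 1 := by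
  induction hg using Subgroup.closure_induction with
  | mem x hx =>
    obtain ⟨i, hi, rfl⟩ := hx
    refine ⟨FreeGroup.of i, rfl, ?_⟩
    intro l hl
    rw [FreeGroup.toWord_of] at hl
    simp only [List.mem_singleton] at hl
    subst hl
    exact hi
  | one =>
    refine ⟨1, map_one _, ?_⟩
    intro l hl
    rw [FreeGroup.toWord_one] at hl
    simp at hl
  | mul x y hx hy ihx ihy =>
    obtain ⟨u₁, h1, p1⟩ := ihx
    obtain ⟨u₂, h2, p2⟩ := ihy
    refine ⟨u₁ * u₂, by rw [map_mul, h1, h2], ?_⟩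
    intro l hl
    rcases letters_mul u₁ u₂ l hl with h | h
    · exact p1 l h
    · exact p2 l h
  | inv x hx ih =>
    obtain ⟨u, h1, p1⟩ := ih
    refine ⟨u⁻¹, by rw [map_inv, h1], ?_⟩
    intro l hl
    exact p1 (l.1, !l.2) (letters_inv u l hl)

/-- If `n ≥ 3`, `N ⊴ B_n` is nontrivial with `N ∩ B_{n-1} = 1`, and the Dehornoy ordering
restricted to `N` is discrete, then the least positive element of `N` lies in the
centralizer of `B_{n-1}` in `B_n`. -/
theorem stmt_8 {n : ℕ} (hn : 3 ≤ n)
    (hmul : ∀ a b : BraidGroup n, DPos a → DPos b → DPos (a * b))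
    (htri : ∀ a : BraidGroup n,
      (a = 1 ∧ ¬DPos a ∧ ¬DPos a⁻¹) ∨ (DPos a ∧ a ≠ 1 ∧ ¬DPos a⁻¹) ∨
      (DPos a⁻¹ ∧ a ≠ 1 ∧ ¬DPos a))
    (N : Subgroup (BraidGroup n)) (hNnormal : N.Normal) (hNnontriv : N ≠ ⊥)
    (hNint : N ⊓ braidSub n (n - 1) = ⊥)
    (β : BraidGroup n) (hβN : β ∈ N) (hβpos : DPos β)
    (hβleast : ∀ γ : BraidGroup n, γ ∈ N → DPos γ → γ = β ∨ DLt β γ) :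
    β ∈ Subgroup.centralizer (braidSub n (n - 1) : Set (BraidGroup n)) := by
  have hn2 : n - 2 < n - 1 := by omega
  -- every Dehornoy-positive braid has a word in which the top generator occurs
  -- only positively
  have hword : ∀ δ : BraidGroup n, DPos δ →
      ∃ w : FreeGroup (Fin (n - 1)), PresentedGroup.mk (braidRels (n - 1)) w = δ ∧
        ∀ l ∈ w.toWord, (l.1 : ℕ) = n - 2 → l.2 = true := by
    rintro δ ⟨i, w, hw, hcond, -⟩
    refine ⟨w, hw, fun l hl hl1 => ?_⟩
    have h1 := (hcond l hl).1
    have h2 := (hcond l hl).2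
    have hile := i.isLt
    have hlle := Fin.le_def.mp h1
    have : l.1 = i := Fin.ext (by omega)
    exact h2 this
  -- conjugation by an element of `B_{n-1}` preserves Dehornoy positivity of
  -- elements of `N`
  have key : ∀ g ∈ braidSub n (n - 1), ∀ δ ∈ N, DPos δ → DPos (g * δ * g⁻¹) := by
    intro g hg δ hδ hδpos
    obtain ⟨w, hw, hwpos⟩ := hword δ hδpos
    obtain ⟨u, hu, hult⟩ := exists_word_of_mem_braidSub hg
    set v := u * w * u⁻¹ with hv
    have hvmk : PresentedGroup.mk (braidRels (n - 1)) v = g * δ * g⁻¹ := by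
      rw [hv, map_mul, map_mul, map_inv, hu, hw]
    have hvlet : ∀ l ∈ v.toWord, l ∈ u.toWord ∨ l ∈ w.toWord ∨ (l.1, !l.2) ∈ u.toWord := by
      intro l hl
      rcases letters_mul (u * w) u⁻¹ l hl with h | h
      · rcases letters_mul u w l h with h' | h'
        · exact Or.inl h'
        · exact Or.inr (Or.inl h')
      · exact Or.inr (Or.inr (letters_inv u l h))
    by_cases hocc : ∃ l ∈ v.toWord, (l.1 : ℕ) = n - 2
    · refine ⟨⟨n - 2, hn2⟩, v, hvmk, ?_, ?_⟩
      · intro l hl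
        constructor
        · have := l.1.isLt
          exact Fin.le_def.mpr (by show (l.1 : ℕ) ≤ n - 2; omega)
        · intro hli
          have hln : (l.1 : ℕ) = n - 2 := congrArg Fin.val hli
          rcases hvlet l hl with h | h | h
          · exact absurd hln (by have := hult l h; omega)
          · exact hwpos l h hln
          · exact absurd hln (by have := hult _ h; simp only at this; omega)
      · obtain ⟨l, hl, hl2⟩ := hocc
        exact ⟨l, hl, Fin.ext hl2⟩
    · push_neg at hocc
      have hall : ∀ l ∈ v.toWord, (l.1 : ℕ) < n - 1 - 1 := by
        intro l hl
        have h1 := l.1.isLt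
        have h2 := hocc l hl
        omega
      have hmem : g * δ * g⁻¹ ∈ braidSub n (n - 1) := by
        have := mk_mem_braidSub v.toWord hall
        rwa [FreeGroup.mk_toWord, hvmk] at this
      have hmemN : g * δ * g⁻¹ ∈ N := hNnormal.conj_mem δ hδ g
      have hbot : g * δ * g⁻¹ ∈ N ⊓ braidSub n (n - 1) := ⟨hmemN, hmem⟩
      rw [hNint] at hbot
      have hconj1 : g * δ * g⁻¹ = 1 := hbot
      have hδ1 : δ = 1 := by
        have : δ = g⁻¹ * (g * δ * g⁻¹) * g := by group
        rw [hconj1] at this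
        simpa using this
      exfalso
      rcases htri δ with ⟨_, hA, _⟩ | ⟨_, hA, _⟩ | ⟨_, hA, _⟩
      · exact hA hδpos
      · exact hA hδ1
      · exact hA hδ1
  -- main argument
  rw [Subgroup.mem_centralizer_iff]
  intro g hg
  have hγN : g * β * g⁻¹ ∈ N := hNnormal.conj_mem β hβN g
  have hγpos : DPos (g * β * g⁻¹) := key g hg β hβN hβpos
  rcases hβleast _ hγN hγpos with h | h
  · calc g * β = (g * β * g⁻¹) * g := by group
    _ = β * g := by rw [h]
  · exfalso
    simp only [DLt] at h
    have hg' : g⁻¹ ∈ braidSub n (n - 1) := inv_mem hg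
    have hβ'N : g⁻¹ * β * g ∈ N := by
      have := hNnormal.conj_mem β hβN g⁻¹
      simpa using this
    have hβ'pos : DPos (g⁻¹ * β * g) := by
      have := key g⁻¹ hg' β hβN hβpos
      simpa using this
    rcases hβleast _ hβ'N hβ'pos with h2 | h2
    · have hfix : g * β * g⁻¹ = β := by
        have := congrArg (fun x => g * x * g⁻¹) h2
        calc g * β * g⁻¹ = g * (g⁻¹ * β * g) * g⁻¹ := by rw [h2]
        _ = β := by group
      rw [hfix] at h
      simp only [inv_mul_cancel] at h
      rcases htri (1 : BraidGroup n) with ⟨_, hA, _⟩ | ⟨_, hA, _⟩ | ⟨hA, hB, _⟩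
      · exact hA h
      · exact hA rfl
      · exact hB rfl
    · simp only [DLt] at h2
      have hδN : β⁻¹ * (g⁻¹ * β * g) ∈ N := mul_mem (inv_mem hβN) hβ'N
      have h3 := key g hg _ hδN h2
      have heq : g * (β⁻¹ * (g⁻¹ * β * g)) * g⁻¹ = (β⁻¹ * (g * β * g⁻¹))⁻¹ := by group
      rw [heq] at h3
      rcases htri (β⁻¹ * (g * β * g⁻¹)) with ⟨_, hA, _⟩ | ⟨_, _, hA⟩ | ⟨_, _, hA⟩
      · exact hA h
      · exact hA h3
      · exact hA h
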